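/- Let A be a compact subset of ℝ² and let D be a bounded connected component of ℝ² ∖ A. Then the diameter of D does not exceed the diameter of A. -/

import Mathlib

/-- A space has the fixed point property: every continuous self-map has a fixed point. -/
def HasFPP (Y : Type*) [TopologicalSpace Y] : Prop :=
  ∀ f : Y → Y, Continuous f → ∃ x, f x = x

/-- A space has the periodic point property: every continuous self-map has a periodic point. -/
def HasPPP (Y : Type*) [TopologicalSpace Y] : Prop :=
  ∀ f : Y → Y, Continuous f → ∃ x, ∃ n : ℕ, 1 ≤ n ∧ f^[n] x = x

/-- Local fixed point property: there is an open basis whose members have closures with FPP. -/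
def HasLFPP (Y : Type*) [TopologicalSpace Y] : Prop :=
  ∃ 𝓑 : Set (Set Y), TopologicalSpace.IsTopologicalBasis 𝓑 ∧
    ∀ B ∈ 𝓑, HasFPP ↥(closure B)

/-- Weak local fixed point property. -/
def HasWLFPP (Y : Type*) [TopologicalSpace Y] : Prop :=
  ∃ 𝓑 : Set (Set Y), TopologicalSpace.IsTopologicalBasis 𝓑 ∧
    ∀ B ∈ 𝓑, ∀ f : Y → Y, Continuous f → f '' closure B ⊆ B → ∃ x ∈ B, f x = x

/-- Local periodic point property. -/
def HasLPPP (Y : Type*) [TopologicalSpace Y] : Prop :=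
  ∃ 𝓑 : Set (Set Y), TopologicalSpace.IsTopologicalBasis 𝓑 ∧
    ∀ B ∈ 𝓑, HasPPP ↥(closure B)

/-- Weak local periodic point property. -/
def HasWLPPP (Y : Type*) [TopologicalSpace Y] : Prop :=
  ∃ 𝓑 : Set (Set Y), TopologicalSpace.IsTopologicalBasis 𝓑 ∧
    ∀ B ∈ 𝓑, ∀ f : Y → Y, Continuous f → f '' closure B ⊆ B →
      ∃ x ∈ B, ∃ n : ℕ, 1 ≤ n ∧ f^[n] x = x

/-- A subset is a simple closed curve if it is homeomorphic to the unit circle. -/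
def IsSimpleClosedCurve {α : Type*} [TopologicalSpace α] (S : Set α) : Prop :=
  Nonempty (↥S ≃ₜ ↥(Metric.sphere (0 : EuclideanSpace ℝ (Fin 2)) 1))

/-- Covering dimension at most `n`: every finite open cover admits an open shrinking
of order at most `n + 1`. -/
def CoveringDimLE (Y : Type*) [TopologicalSpace Y] (n : ℕ) : Prop :=
  ∀ (ι : Type) [Finite ι] (U : ι → Set Y), (∀ i, IsOpen (U i)) → (⋃ i, U i) = Set.univ →
    ∃ V : ι → Set Y, (∀ i, IsOpen (V i)) ∧ (∀ i, V i ⊆ U i) ∧ (⋃ i, V i) = Set.univ ∧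
      ∀ y : Y, {i | y ∈ V i}.ncard ≤ n + 1

/-- A dendrite: a locally connected (metric) continuum containing no simple closed curve. -/
def IsDendrite {α : Type*} [TopologicalSpace α] (D : Set α) : Prop :=
  IsCompact D ∧ IsConnected D ∧ LocallyConnectedSpace ↥D ∧ ∀ S ⊆ D, ¬ IsSimpleClosedCurve S

/-- A local dendrite: every point has a closed neighborhood which is a dendrite. -/
def IsLocalDendrite (Y : Type*) [TopologicalSpace Y] : Prop :=
  ∀ y : Y, ∃ N : Set Y, N ∈ nhds y ∧ IsClosed N ∧ IsDendrite N

/-- The diameter of a bounded component of the complement of a compact planar set does not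
exceed the diameter of the set. -/
theorem stmt_5 (A : Set (EuclideanSpace ℝ (Fin 2))) (hA : IsCompact A)
    (D : Set (EuclideanSpace ℝ (Fin 2)))
    (hD : ∃ x ∈ Aᶜ, D = connectedComponentIn Aᶜ x)
    (hbd : Bornology.IsBounded D) :
    Metric.diam D ≤ Metric.diam A := by
  obtain ⟨x₀, hx₀, rfl⟩ := hD
  rcases A.eq_empty_or_nonempty with rfl | ⟨a₀, ha₀⟩
  · exfalso
    have : connectedComponentIn (∅ : Set (EuclideanSpace ℝ (Fin 2)))ᶜ x₀ = Set.univ := by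
      rw [Set.compl_empty]
      exact (isPreconnected_univ.subset_connectedComponentIn (Set.mem_univ x₀)
        subset_rfl).antisymm' (Set.subset_univ _)
    rw [this] at hbd
    exact (Metric.isBounded_iff.mp hbd).elim fun C hC => by
      have h1 := hC (Set.mem_univ (0 : EuclideanSpace ℝ (Fin 2)))
        (Set.mem_univ ((C + 1) • EuclideanSpace.single 0 1))
      have h2 : dist (0 : EuclideanSpace ℝ (Fin 2))
          ((C + 1) • EuclideanSpace.single 0 1) = |C + 1| := by
        simp [dist_eq_norm, norm_smul, EuclideanSpace.norm_single]
      rw [h2] at h1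
      have : (0:ℝ) ≤ C := dist_nonneg.trans (hC (Set.mem_univ 0) (Set.mem_univ 0))
      nlinarith [abs_nonneg (C+1), le_abs_self (C+1)]
  · set K := closure (convexHull ℝ A) with hK
    have hKconv : Convex ℝ K := (convex_convexHull ℝ A).closure
    have hAK : A ⊆ K := (subset_convexHull ℝ A).trans subset_closure
    have hsub : connectedComponentIn Aᶜ x₀ ⊆ K := by
      intro y hy
      by_contra hyK
      obtain ⟨f, u, hfu, huf⟩ := geometric_hahn_banach_closed_point hKconv isClosed_closure hyK
      set H : Set (EuclideanSpace ℝ (Fin 2)) := {z | u < f z} with hHdef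
      have hHsub : H ⊆ Aᶜ := fun z hz ha => absurd (hfu z (hAK ha)) (not_lt.mpr hz.le)
      have hHconn : IsPreconnected H :=
        (convex_halfSpace_gt (f.toLinearMap.isLinear) u).isPreconnected
      have hHcomp : H ⊆ connectedComponentIn Aᶜ x₀ := by
        rw [connectedComponentIn_eq hy]
        exact hHconn.subset_connectedComponentIn huf hHsub
      have hHbd : Bornology.IsBounded H := hbd.subset hHcomp
      obtain ⟨C, hC⟩ := isBounded_iff_forall_norm_le.mp hHbd
      set w : EuclideanSpace ℝ (Fin 2) := y - a₀ with hw
      have hfw : 0 < f w := by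
        have := hfu a₀ (hAK ha₀)
        simp only [hw, map_sub]
        linarith
      have hwnorm : 0 < ‖w‖ := norm_pos_iff.mpr (fun h => by simp [h] at hfw)
      have hyC : ‖y‖ ≤ C := hC y huf
      set t : ℝ := (C + ‖y‖ + 1) / ‖w‖ with ht
      have ht0 : 0 < t := div_pos (by linarith [norm_nonneg y]) hwnorm
      have hzH : y + t • w ∈ H := by
        have : f (y + t • w) = f y + t * f w := by simp [map_add, map_smul]
        simp only [hHdef, Set.mem_setOf_eq, this]
        nlinarith
      have hzC := hC _ hzH
      have : t * ‖w‖ = C + ‖y‖ + 1 := by rw [ht]; field_simp [hwnorm.ne']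
      have hge : t * ‖w‖ - ‖y‖ ≤ ‖y + t • w‖ := by
        have h1 := norm_sub_le (y + t • w) y
        simp only [add_sub_cancel_left] at h1
        rw [norm_smul, Real.norm_eq_abs, abs_of_pos ht0] at h1
        linarith
      linarith
    calc Metric.diam (connectedComponentIn Aᶜ x₀)
        ≤ Metric.diam K := Metric.diam_mono hsub
          ((isBounded_convexHull.mpr hA.isBounded).closure)
      _ = Metric.diam A := by rw [hK, Metric.diam_closure, convexHull_diam]
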